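/- Let d = 2, r ≥ 1, and B = ∏_{j=1}^2 [z_j − r u_j/2, z_j + r u_j/2) ⊂ [0,1)² with u ∈ (0,1/2]², v := vol(B) = r² u_1 u_2. Define H_B^r(s) := (u_1 u_2 / 2^{s_1+s_2})^{r/2} ∏_{j=1}^2 min((2^{s_j} u_j)^{r/2}, (2^{s_j} u_j)^{-r/2}). Then for all t ∈ ℕ_0 with v ≥ r² 2^{-t+1}, Σ_{s_1+s_2 = t} H_B^r(s)² ≤ C · 2^{-2rt} · log(2^t v) for an absolute constant C. -/

import Mathlib

open Real Finset


lemma min_rpow_aux {x : ℝ} (hx : 0 < x) {c : ℝ} (hc : 0 ≤ c) :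
    min (x ^ c) (x ^ (-c)) = (min x x⁻¹) ^ c := by
  rw [Real.rpow_neg hx.le, ← Real.inv_rpow hx.le]
  rcases le_total x x⁻¹ with h | h
  · rw [min_eq_left h, min_eq_left (Real.rpow_le_rpow hx.le h hc)]
  · rw [min_eq_right h, min_eq_right (Real.rpow_le_rpow (inv_nonneg.mpr hx.le) h hc)]

lemma aux_le_inv {a : ℝ} (ha : 0 < a) (h1 : a ≤ 1) : a ≤ a⁻¹ := by
  nlinarith [mul_inv_cancel₀ ha.ne', inv_pos.mpr ha]

lemma key2 {u : ℝ} (hu : 0 < u) {p : ℝ} (hp : 0 < p) :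
    u / p * min (p * u) (p * u)⁻¹ = (min u p⁻¹) ^ 2 := by
  have hpu : 0 < p * u := mul_pos hp hu
  rcases le_total u p⁻¹ with h | h
  · have h1 : p * u ≤ 1 := by
      rw [← mul_inv_cancel₀ hp.ne']
      exact mul_le_mul_of_nonneg_left h hp.le
    rw [min_eq_left (aux_le_inv hpu h1), min_eq_left h]
    field_simp
  · have h1 : 1 ≤ p * u := by
      rw [← mul_inv_cancel₀ hp.ne']
      exact mul_le_mul_of_nonneg_left h hp.le
    have h2 : (p * u)⁻¹ ≤ p * u := by nlinarith [mul_inv_cancel₀ hpu.ne']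
    rw [min_eq_right h2, min_eq_right h]
    field_simp


lemma tail_geom (u : ℝ) (hu : 0 < u) (n : ℕ) :
    ∑ k ∈ (range n).filter (fun k => (2:ℝ)^k * u < 1), ((2:ℝ)^k * u)^2 ≤ 4/3 := by
  set S := (range n).filter (fun k => (2:ℝ)^k * u < 1) with hS
  rcases S.eq_empty_or_nonempty with h | h
  · rw [h]; norm_num
  · set M := S.max' h with hM
    have hMmem := S.max'_mem h
    have hMlt : (2:ℝ)^M * u < 1 := (Finset.mem_filter.mp hMmem).2
    have hsub : S ⊆ range (M+1) := by
      intro k hk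
      exact Finset.mem_range.mpr (Nat.lt_succ_of_le (S.le_max' k hk))
    have h1 : ∑ k ∈ S, ((2:ℝ)^k * u)^2 ≤ ∑ k ∈ range (M+1), ((2:ℝ)^k * u)^2 := by
      apply Finset.sum_le_sum_of_subset_of_nonneg hsub
      intro i _ _; positivity
    have h2 : ∑ k ∈ range (M+1), ((2:ℝ)^k * u)^2 = (((4:ℝ)^(M+1) - 1)/3) * u^2 := by
      have : ∀ k, ((2:ℝ)^k * u)^2 = (4:ℝ)^k * u^2 := by
        intro k
        rw [mul_pow, ← pow_mul, mul_comm k 2, pow_mul]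
        norm_num
      simp_rw [this, ← Finset.sum_mul, geom_sum_eq (by norm_num : (4:ℝ) ≠ 1)]
      norm_num
    have h3 : (4:ℝ)^M * u^2 < 1 := by
      have : ((2:ℝ)^M * u)^2 < 1 := by nlinarith [mul_pos (pow_pos (by norm_num : (0:ℝ) < 2) M) hu]
      calc (4:ℝ)^M * u^2 = ((2:ℝ)^M * u)^2 := by
            rw [mul_pow, ← pow_mul, mul_comm M 2, pow_mul]; norm_num
        _ < 1 := this
    have h4 : (((4:ℝ)^(M+1) - 1)/3) * u^2 ≤ 4/3 := by
      rw [pow_succ]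
      nlinarith [sq_nonneg u]
    linarith



lemma count_lem (u₁ u₂ : ℝ) (h₁ : 0 < u₁) (h₂ : 0 < u₂) (t : ℕ)
    (hP : 2 ≤ (2:ℝ)^t * (u₁ * u₂)) :
    ∑ k ∈ range (t+1), (min 1 (min ((2:ℝ)^k * u₁) ((2:ℝ)^(t-k) * u₂)))^2
      ≤ 5 * Real.logb 2 ((2:ℝ)^t * (u₁ * u₂)) := by
  classical
  set P := (2:ℝ)^t * (u₁ * u₂) with hPdef
  have hPpos : 0 < P := by linarith
  have hlogP : 1 ≤ Real.logb 2 P := by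
    calc (1:ℝ) = Real.logb 2 2 := by simp
      _ ≤ Real.logb 2 P := Real.logb_le_logb_of_le one_lt_two two_pos hP
  -- pointwise bound
  have hpt : ∀ k ∈ range (t+1),
      (min 1 (min ((2:ℝ)^k * u₁) ((2:ℝ)^(t-k) * u₂)))^2 ≤
        (if (2:ℝ)^k * u₁ < 1 then ((2:ℝ)^k*u₁)^2 else 0)
        + ((if (2:ℝ)^(t-k) * u₂ < 1 then ((2:ℝ)^(t-k)*u₂)^2 else 0)
        + (if 1 ≤ (2:ℝ)^k * u₁ ∧ 1 ≤ (2:ℝ)^(t-k) * u₂ then 1 else 0)) := by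
    intro k _
    set a := (2:ℝ)^k * u₁ with ha
    set b := (2:ℝ)^(t-k) * u₂ with hb
    have hapos : 0 < a := by positivity
    have hbpos : 0 < b := by positivity
    have hwnn : 0 ≤ min 1 (min a b) := le_min zero_le_one (le_min hapos.le hbpos.le)
    have hb2 : (0:ℝ) ≤ (if b < 1 then b^2 else 0) := by positivity
    have ha2 : (0:ℝ) ≤ (if a < 1 then a^2 else 0) := by positivity
    have hc2 : (0:ℝ) ≤ (if 1 ≤ a ∧ 1 ≤ b then (1:ℝ) else 0) := by positivity
    rcases lt_or_ge a 1 with hc1 | hc1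
    · have h5 : (min 1 (min a b))^2 ≤ a^2 :=
        pow_le_pow_left₀ hwnn (le_trans (min_le_right _ _) (min_le_left _ _)) 2
      rw [if_pos hc1]
      linarith
    · rcases lt_or_ge b 1 with hd1 | hd1
      · have h5 : (min 1 (min a b))^2 ≤ b^2 :=
          pow_le_pow_left₀ hwnn (le_trans (min_le_right _ _) (min_le_right _ _)) 2
        rw [if_pos hd1]
        linarith
      · have h5 : (min 1 (min a b))^2 ≤ 1 := by
          have := pow_le_pow_left₀ hwnn (min_le_left 1 (min a b)) 2
          simpa using this
        have h6 : (if 1 ≤ a ∧ 1 ≤ b then (1:ℝ) else 0) = 1 := if_pos ⟨hc1, hd1⟩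
        rw [h6]
        linarith
  have hsum := Finset.sum_le_sum hpt
  rw [Finset.sum_add_distrib, Finset.sum_add_distrib] at hsum
  -- first sum
  have hA : ∑ k ∈ range (t+1), (if (2:ℝ)^k * u₁ < 1 then ((2:ℝ)^k*u₁)^2 else 0) ≤ 4/3 := by
    rw [← Finset.sum_filter]
    exact tail_geom u₁ h₁ (t+1)
  -- second sum: reflect
  have hB : ∑ k ∈ range (t+1), (if (2:ℝ)^(t-k) * u₂ < 1 then ((2:ℝ)^(t-k)*u₂)^2 else 0) ≤ 4/3 := by
    have hrefl := Finset.sum_range_reflect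
      (fun j => (if (2:ℝ)^j * u₂ < 1 then ((2:ℝ)^j*u₂)^2 else 0)) (t+1)
    simp only [Nat.add_sub_cancel] at hrefl
    rw [hrefl, ← Finset.sum_filter]
    exact tail_geom u₂ h₂ (t+1)
  -- third sum: cardinality
  have hC : ∑ k ∈ range (t+1), (if 1 ≤ (2:ℝ)^k * u₁ ∧ 1 ≤ (2:ℝ)^(t-k) * u₂ then (1:ℝ) else 0)
      ≤ Real.logb 2 P + 1 := by
    rw [Finset.sum_boole]
    set S := (range (t+1)).filter (fun k => 1 ≤ (2:ℝ)^k * u₁ ∧ 1 ≤ (2:ℝ)^(t-k) * u₂) with hSdef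
    rcases S.eq_empty_or_nonempty with h | h
    · rw [h]; simp; linarith
    · have hmmem := S.min'_mem h
      have hMmem := S.max'_mem h
      set m := S.min' h with hm
      set M := S.max' h with hM2
      have hmM : m ≤ M := S.min'_le M hMmem
      have hMt : M ≤ t := by
        have := Finset.mem_range.mp (Finset.mem_filter.mp hMmem).1
        omega
      have h1 : (1:ℝ) ≤ (2:ℝ)^m * u₁ := (Finset.mem_filter.mp hmmem).2.1
      have h2 : (1:ℝ) ≤ (2:ℝ)^(t-M) * u₂ := (Finset.mem_filter.mp hMmem).2.2
      have hpow : (2:ℝ)^(M-m) ≤ P := by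
        have he : ((2:ℝ)^(M-m)) * (2:ℝ)^m * (2:ℝ)^(t-M) = (2:ℝ)^t := by
          rw [← pow_add, ← pow_add]
          congr 1
          omega
        have hid : (2:ℝ)^(M-m) * (((2:ℝ)^m * u₁) * ((2:ℝ)^(t-M) * u₂)) = P := by
          rw [hPdef, ← he]
          ring
        have hAB : 1 ≤ ((2:ℝ)^m * u₁) * ((2:ℝ)^(t-M) * u₂) := by nlinarith
        calc (2:ℝ)^(M-m) = (2:ℝ)^(M-m) * 1 := by ring
          _ ≤ (2:ℝ)^(M-m) * (((2:ℝ)^m * u₁) * ((2:ℝ)^(t-M) * u₂)) :=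
              mul_le_mul_of_nonneg_left hAB (pow_pos (by norm_num : (0:ℝ) < 2) (M-m)).le
          _ = P := hid
      have hcard : (S.card : ℝ) ≤ ((M - m : ℕ) : ℝ) + 1 := by
        have hsub : S ⊆ Finset.Icc m M := by
          intro k hk
          exact Finset.mem_Icc.mpr ⟨S.min'_le k hk, S.le_max' k hk⟩
        have := Finset.card_le_card hsub
        rw [Nat.card_Icc] at this
        have h7 : S.card ≤ (M - m) + 1 := by omega
        exact_mod_cast h7
      have hlog : ((M - m : ℕ) : ℝ) ≤ Real.logb 2 P := by
        rw [Real.le_logb_iff_rpow_le one_lt_two hPpos, Real.rpow_natCast]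
        exact hpow
      linarith
  linarith



lemma pointwise_bound (r : ℕ) (hr : 1 ≤ r) (u₁ u₂ : ℝ) (h₁ : 0 < u₁) (h₂ : 0 < u₂)
    (s₁ s₂ : ℕ) :
    ((u₁ * u₂ / 2 ^ (s₁ + s₂)) ^ ((r : ℝ) / 2) *
      (min (((2 : ℝ) ^ s₁ * u₁) ^ ((r : ℝ) / 2)) (((2 : ℝ) ^ s₁ * u₁) ^ (-((r : ℝ) / 2))) *
       min (((2 : ℝ) ^ s₂ * u₂) ^ ((r : ℝ) / 2)) (((2 : ℝ) ^ s₂ * u₂) ^ (-((r : ℝ) / 2))))) ^ 2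
    ≤ (2:ℝ) ^ (-(2 * (r:ℝ) * ((s₁+s₂ : ℕ) : ℝ))) *
        (min 1 (min ((2:ℝ)^s₁ * u₁) ((2:ℝ)^s₂ * u₂)))^2 := by
  have hc : (0:ℝ) ≤ (r:ℝ)/2 := by positivity
  have hx₁ : (0:ℝ) < (2:ℝ)^s₁ * u₁ := by positivity
  have hx₂ : (0:ℝ) < (2:ℝ)^s₂ * u₂ := by positivity
  set m₁ := min u₁ ((2:ℝ)^s₁)⁻¹ with hm₁
  set m₂ := min u₂ ((2:ℝ)^s₂)⁻¹ with hm₂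
  have hm₁pos : 0 < m₁ := lt_min h₁ (by positivity)
  have hm₂pos : 0 < m₂ := lt_min h₂ (by positivity)
  -- rewrite LHS as ((m₁^2 * m₂^2) ^ ((r:ℝ)/2))^2 = (m₁^2*m₂^2)^(r:ℝ)
  have hsplit : u₁ * u₂ / 2 ^ (s₁ + s₂) = (u₁ / 2^s₁) * (u₂ / 2^s₂) := by
    rw [pow_add]; field_simp
  have hLHS : ((u₁ * u₂ / 2 ^ (s₁ + s₂)) ^ ((r : ℝ) / 2) *
      (min (((2 : ℝ) ^ s₁ * u₁) ^ ((r : ℝ) / 2)) (((2 : ℝ) ^ s₁ * u₁) ^ (-((r : ℝ) / 2))) *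
       min (((2 : ℝ) ^ s₂ * u₂) ^ ((r : ℝ) / 2)) (((2 : ℝ) ^ s₂ * u₂) ^ (-((r : ℝ) / 2))))) ^ 2
      = ((m₁^2 * m₂^2) ^ ((r:ℝ))) := by
    rw [min_rpow_aux hx₁ hc, min_rpow_aux hx₂ hc, hsplit,
      Real.mul_rpow (by positivity) (by positivity)]
    have e1 : (u₁ / 2^s₁) ^ ((r:ℝ)/2) * (u₂ / 2^s₂) ^ ((r:ℝ)/2) *
        ((min ((2:ℝ)^s₁*u₁) ((2:ℝ)^s₁*u₁)⁻¹) ^ ((r:ℝ)/2) *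
         (min ((2:ℝ)^s₂*u₂) ((2:ℝ)^s₂*u₂)⁻¹) ^ ((r:ℝ)/2))
        = ((u₁ / 2^s₁ * min ((2:ℝ)^s₁*u₁) ((2:ℝ)^s₁*u₁)⁻¹) *
           (u₂ / 2^s₂ * min ((2:ℝ)^s₂*u₂) ((2:ℝ)^s₂*u₂)⁻¹)) ^ ((r:ℝ)/2) := by
      rw [Real.mul_rpow (by positivity) (by positivity),
          Real.mul_rpow (by positivity) (by positivity),
          Real.mul_rpow (by positivity) (by positivity)]
      exact mul_mul_mul_comm ((u₁ / 2^s₁) ^ ((r:ℝ)/2)) ((u₂ / 2^s₂) ^ ((r:ℝ)/2))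
        ((min ((2:ℝ)^s₁*u₁) ((2:ℝ)^s₁*u₁)⁻¹) ^ ((r:ℝ)/2))
        ((min ((2:ℝ)^s₂*u₂) ((2:ℝ)^s₂*u₂)⁻¹) ^ ((r:ℝ)/2))
    rw [e1, key2 h₁ (by positivity : (0:ℝ) < (2:ℝ)^s₁),
        key2 h₂ (by positivity : (0:ℝ) < (2:ℝ)^s₂), ← hm₁, ← hm₂,
        ← Real.rpow_natCast ((m₁^2 * m₂^2) ^ ((r:ℝ)/2)) 2,
        ← Real.rpow_mul (by positivity)]
    norm_num
  rw [hLHS]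
  -- now bound
  set w := min 1 (min ((2:ℝ)^s₁ * u₁) ((2:ℝ)^s₂ * u₂)) with hw
  have hwpos : 0 < w := lt_min one_pos (lt_min hx₁ hx₂)
  have hwle1 : w ≤ 1 := min_le_left _ _
  set q := ((2:ℝ)^(s₁+s₂))⁻¹ with hq
  have hqpos : 0 < q := by positivity
  have hmm : m₁ * m₂ ≤ q * w := by
    have h0 : m₁ * m₂ ≤ ((2:ℝ)^s₁)⁻¹ * ((2:ℝ)^s₂)⁻¹ :=
      mul_le_mul (min_le_right _ _) (min_le_right _ _) hm₂pos.le (by positivity)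
    have ha : m₁ * m₂ ≤ u₁ * ((2:ℝ)^s₂)⁻¹ :=
      mul_le_mul (min_le_left _ _) (min_le_right _ _) hm₂pos.le h₁.le
    have hb : m₁ * m₂ ≤ ((2:ℝ)^s₁)⁻¹ * u₂ :=
      mul_le_mul (min_le_right _ _) (min_le_left _ _) hm₂pos.le (by positivity)
    have hq1 : q * 1 = ((2:ℝ)^s₁)⁻¹ * ((2:ℝ)^s₂)⁻¹ := by
      rw [hq, pow_add, mul_inv, mul_one]
    have hq2 : q * ((2:ℝ)^s₁ * u₁) = u₁ * ((2:ℝ)^s₂)⁻¹ := by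
      rw [hq, pow_add]; field_simp
    have hq3 : q * ((2:ℝ)^s₂ * u₂) = ((2:ℝ)^s₁)⁻¹ * u₂ := by
      rw [hq, pow_add]; field_simp
    have hdist : q * w = min (q*1) (min (q*((2:ℝ)^s₁*u₁)) (q*((2:ℝ)^s₂*u₂))) := by
      rw [hw, mul_min_of_nonneg _ _ hqpos.le, mul_min_of_nonneg _ _ hqpos.le]
    rw [hdist, hq1, hq2, hq3]
    exact le_min h0 (le_min ha hb)
  have hqr : q = (2:ℝ)^(-(((s₁+s₂ : ℕ)):ℝ)) := by
    rw [hq, ← Real.rpow_natCast 2 (s₁+s₂), ← Real.rpow_neg (by norm_num)]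
  have hq2pow : (q^2)^(r:ℝ) = (2:ℝ)^(-(2*(r:ℝ)*((s₁+s₂ : ℕ):ℝ))) := by
    rw [hqr, ← Real.rpow_natCast ((2:ℝ)^(-(((s₁+s₂ : ℕ)):ℝ))) 2,
      ← Real.rpow_mul (by positivity), ← Real.rpow_mul (by norm_num)]
    congr 1
    push_cast
    ring
  calc (m₁^2 * m₂^2)^(r:ℝ) = ((m₁*m₂)^2)^(r:ℝ) := by rw [mul_pow]
    _ ≤ ((q*w)^2)^(r:ℝ) :=
        Real.rpow_le_rpow (by positivity) (pow_le_pow_left₀ (by positivity) hmm 2) (by positivity)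
    _ = (q^2)^(r:ℝ) * (w^2)^(r:ℝ) := by
        rw [mul_pow, Real.mul_rpow (by positivity) (by positivity)]
    _ ≤ (q^2)^(r:ℝ) * w^2 := by
        have hw1 : w^2 ≤ 1 := by nlinarith
        have h1 : (w^2)^(r:ℝ) ≤ (w^2)^(1:ℝ) :=
          Real.rpow_le_rpow_of_exponent_ge (by positivity) hw1 (by exact_mod_cast hr)
        rw [Real.rpow_one] at h1
        exact mul_le_mul_of_nonneg_left h1 (by positivity)
    _ = (2:ℝ)^(-(2*(r:ℝ)*((s₁+s₂ : ℕ):ℝ))) * w^2 := by rw [hq2pow]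

theorem stmt11 :
    ∃ C : ℝ, 0 < C ∧ ∀ (r : ℕ), 1 ≤ r →
      ∀ u₁ u₂ : ℝ, 0 < u₁ → u₁ ≤ 1 / 2 → 0 < u₂ → u₂ ≤ 1 / 2 →
      ∀ z₁ z₂ : ℝ,
        Set.Ico (z₁ - r * u₁ / 2) (z₁ + r * u₁ / 2) ⊆ Set.Ico (0 : ℝ) 1 →
        Set.Ico (z₂ - r * u₂ / 2) (z₂ + r * u₂ / 2) ⊆ Set.Ico (0 : ℝ) 1 →
      ∀ v : ℝ, v = (r : ℝ) ^ 2 * u₁ * u₂ →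
      ∀ t : ℕ, (r : ℝ) ^ 2 * (2 : ℝ) ^ (1 - (t : ℝ)) ≤ v →
      ∑ s ∈ Finset.HasAntidiagonal.antidiagonal t,
          ((u₁ * u₂ / 2 ^ (s.1 + s.2)) ^ ((r : ℝ) / 2) *
            (min (((2 : ℝ) ^ s.1 * u₁) ^ ((r : ℝ) / 2)) (((2 : ℝ) ^ s.1 * u₁) ^ (-((r : ℝ) / 2))) *
             min (((2 : ℝ) ^ s.2 * u₂) ^ ((r : ℝ) / 2)) (((2 : ℝ) ^ s.2 * u₂) ^ (-((r : ℝ) / 2))))) ^ 2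
        ≤ C * (2 : ℝ) ^ (-(2 * (r : ℝ) * t)) * Real.log ((2 : ℝ) ^ t * v) := by
  have hl2 : 0 < Real.log 2 := Real.log_pos one_lt_two
  refine ⟨5 / Real.log 2, by positivity, ?_⟩
  intro r hr u₁ u₂ h₁ h₁' h₂ h₂' z₁ z₂ _ _ v hv t ht
  have hrr : (1:ℝ) ≤ (r:ℝ) := by exact_mod_cast hr
  have hpt2 : (0:ℝ) < (2:ℝ)^t := by positivity
  have hP : 2 ≤ (2:ℝ)^t * (u₁ * u₂) := by
    have h2t : (2:ℝ)^(1-(t:ℝ)) = 2 * ((2:ℝ)^t)⁻¹ := by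
      rw [Real.rpow_sub (by norm_num), Real.rpow_one, Real.rpow_natCast]
      ring
    have huv : (2:ℝ)^(1-(t:ℝ)) ≤ u₁*u₂ := by
      rw [hv] at ht
      have hr2 : (0:ℝ) < (r:ℝ)^2 := by positivity
      nlinarith
    rw [h2t] at huv
    calc (2:ℝ) = (2:ℝ)^t * (2 * ((2:ℝ)^t)⁻¹) := by field_simp
      _ ≤ (2:ℝ)^t * (u₁*u₂) := mul_le_mul_of_nonneg_left huv hpt2.le
  have hvpos : 0 < v := by rw [hv]; positivity
  rw [Finset.Nat.sum_antidiagonal_eq_sum_range_succ_mk]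
  have hlog : Real.log ((2:ℝ)^t * (u₁*u₂)) ≤ Real.log ((2:ℝ)^t * v) := by
    apply Real.log_le_log (by positivity)
    rw [hv]
    have hr2 : (1:ℝ) ≤ (r:ℝ)^2 := by nlinarith
    nlinarith [mul_pos h₁ h₂, mul_pos (mul_pos h₁ h₂) hpt2]
  calc ∑ k ∈ range (t+1),
        ((u₁ * u₂ / 2 ^ ((k, t-k).1 + (k, t-k).2)) ^ ((r : ℝ) / 2) *
          (min (((2 : ℝ) ^ (k, t-k).1 * u₁) ^ ((r : ℝ) / 2)) (((2 : ℝ) ^ (k, t-k).1 * u₁) ^ (-((r : ℝ) / 2))) *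
           min (((2 : ℝ) ^ (k, t-k).2 * u₂) ^ ((r : ℝ) / 2)) (((2 : ℝ) ^ (k, t-k).2 * u₂) ^ (-((r : ℝ) / 2))))) ^ 2
      ≤ ∑ k ∈ range (t+1), (2:ℝ)^(-(2*(r:ℝ)*(t:ℝ))) *
          (min 1 (min ((2:ℝ)^k * u₁) ((2:ℝ)^(t-k) * u₂)))^2 := by
        apply Finset.sum_le_sum
        intro k hk
        have hkt : k ≤ t := Nat.lt_succ_iff.mp (Finset.mem_range.mp hk)
        have h := pointwise_bound r hr u₁ u₂ h₁ h₂ k (t-k)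
        have he : k + (t-k) = t := by omega
        rw [he] at h
        dsimp only
        rw [he]
        exact h
    _ = (2:ℝ)^(-(2*(r:ℝ)*(t:ℝ))) *
          ∑ k ∈ range (t+1), (min 1 (min ((2:ℝ)^k * u₁) ((2:ℝ)^(t-k) * u₂)))^2 := by
        rw [← Finset.mul_sum]
    _ ≤ (2:ℝ)^(-(2*(r:ℝ)*(t:ℝ))) * (5 * Real.logb 2 ((2:ℝ)^t * (u₁*u₂))) := by
        apply mul_le_mul_of_nonneg_left (count_lem u₁ u₂ h₁ h₂ t hP) (by positivity)
    _ = 5 / Real.log 2 * (2:ℝ)^(-(2*(r:ℝ)*(t:ℝ))) * Real.log ((2:ℝ)^t * (u₁*u₂)) := by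
        rw [Real.logb]
        field_simp
    _ ≤ 5 / Real.log 2 * (2:ℝ)^(-(2*(r:ℝ)*(t:ℝ))) * Real.log ((2:ℝ)^t * v) := by
        apply mul_le_mul_of_nonneg_left hlog (by positivity)
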